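/- Let S = {β_1, …, β_k} be an orthogonal subset of positive roots of a finite root system Φ, and let S_0 ⊂ S ∪ (−S) be a subset such that the product of affine reflections Π_{β∈S_0} s_{δ−β} equals Π_{β∈S} s_{δ−β} in the affine Weyl group. Then S_0 = S. -/

import Mathlib

open scoped Classical RealInnerProductSpace

/-- The pairing `⟨γ, α^∨⟩ = 2(γ,α)/(α,α)`. -/
noncomputable def pairing {V : Type*} [NormedAddCommGroup V] [InnerProductSpace ℝ V]
    (γ α : V) : ℝ :=
  2 * ⟪γ, α⟫ / ⟪α, α⟫

/-- A finite (crystallographic, reduced) root system in a Euclidean space. -/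
structure IsRootSystem {V : Type*} [NormedAddCommGroup V] [InnerProductSpace ℝ V]
    (Φ : Set V) : Prop where
  finite : Φ.Finite
  ne_zero : ∀ α ∈ Φ, α ≠ 0
  neg_mem : ∀ α ∈ Φ, -α ∈ Φ
  reflect_mem : ∀ α ∈ Φ, ∀ β ∈ Φ, β - pairing β α • α ∈ Φ
  crystal : ∀ α ∈ Φ, ∀ β ∈ Φ, ∃ n : ℤ, pairing β α = n
  reduced : ∀ α ∈ Φ, ∀ t : ℝ, t • α ∈ Φ → t = 1 ∨ t = -1

/-- Irreducibility of a root system: no nontrivial orthogonal decomposition. -/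
def IsIrreducibleRS {V : Type*} [NormedAddCommGroup V] [InnerProductSpace ℝ V]
    (Φ : Set V) : Prop :=
  ∀ Φ₁ Φ₂ : Set V, Φ = Φ₁ ∪ Φ₂ → (∀ α ∈ Φ₁, ∀ β ∈ Φ₂, ⟪α, β⟫ = 0) → Φ₁ = ∅ ∨ Φ₂ = ∅

/-- A set of roots is strongly orthogonal if for any two distinct elements neither the sum
nor the difference is a root. -/
def StronglyOrthogonal {V : Type*} [NormedAddCommGroup V] [InnerProductSpace ℝ V]
    (Φ : Set V) (S : Set V) : Prop :=
  ∀ α ∈ S, ∀ β ∈ S, α ≠ β → α + β ∉ Φ ∧ α - β ∉ Φ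

/-- A set of pairwise orthogonal vectors. -/
def OrthogonalSet {V : Type*} [NormedAddCommGroup V] [InnerProductSpace ℝ V]
    (S : Set V) : Prop :=
  ∀ α ∈ S, ∀ β ∈ S, α ≠ β → ⟪α, β⟫ = 0

/-- A base (set of simple roots) of a root system. -/
structure IsBase {V : Type*} [NormedAddCommGroup V] [InnerProductSpace ℝ V]
    (Φ : Set V) (Δ : Finset V) : Prop where
  subset : ↑Δ ⊆ Φ
  indep : LinearIndependent ℝ (fun b : Δ => (b : V))
  pos_or_neg : ∀ α ∈ Φ, (∃ c : V → ℕ, α = ∑ b ∈ Δ, (c b : ℝ) • b) ∨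
    (∃ c : V → ℕ, -α = ∑ b ∈ Δ, (c b : ℝ) • b)

/-- The positive roots with respect to a base. -/
def PosRoots {V : Type*} [NormedAddCommGroup V] [InnerProductSpace ℝ V]
    (Φ : Set V) (Δ : Finset V) : Set V :=
  {α | α ∈ Φ ∧ ∃ c : V → ℕ, α = ∑ b ∈ Δ, (c b : ℝ) • b}

/-- `θ` is the highest root of `Φ` with respect to the base `Δ`. -/
def IsHighestRoot {V : Type*} [NormedAddCommGroup V] [InnerProductSpace ℝ V]
    (Φ : Set V) (Δ : Finset V) (θ : V) : Prop :=
  θ ∈ Φ ∧ ∀ α ∈ Φ, ∃ c : V → ℕ, θ - α = ∑ b ∈ Δ, (c b : ℝ) • b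

/-- The coroot of the real affine root `(β, n) = β + nδ`, as a linear functional on the affine
root space `V × ℝδ` (it kills `δ`). -/
noncomputable def acoroot {V : Type*} [NormedAddCommGroup V] [InnerProductSpace ℝ V]
    (β : V) : (V × ℝ) →ₗ[ℝ] ℝ :=
  (2 / ⟪β, β⟫) • ((innerSL ℝ β).toLinearMap ∘ₗ LinearMap.fst ℝ V ℝ)

/-- The reflection of the affine Weyl group corresponding to the real affine root
`β + nδ`, acting linearly on the affine root space `V ⊕ ℝδ`. -/
noncomputable def sAff {V : Type*} [NormedAddCommGroup V] [InnerProductSpace ℝ V]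
    (β : V) (n : ℝ) : Module.End ℝ (V × ℝ) :=
  LinearMap.id - LinearMap.smulRight (acoroot β) ((β, n) : V × ℝ)

/-- The set of reflections of the affine Weyl group of `Φ`. -/
def AffRefls {V : Type*} [NormedAddCommGroup V] [InnerProductSpace ℝ V]
    (Φ : Set V) : Set (Module.End ℝ (V × ℝ)) :=
  {f | ∃ β ∈ Φ, ∃ n : ℤ, f = sAff β (n : ℝ)}

/-- The positive real affine roots `α + nδ` with `n > 0`, or `n = 0` and `α` positive. -/
def PosAffRoots {V : Type*} [NormedAddCommGroup V] [InnerProductSpace ℝ V]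
    (Φ : Set V) (Δ : Finset V) : Set (V × ℝ) :=
  {p | p.1 ∈ Φ ∧ (∃ n : ℤ, p.2 = (n : ℝ)) ∧
    (0 < p.2 ∨ (p.2 = 0 ∧ p.1 ∈ PosRoots Φ Δ))}

/-- Length of an element of the affine Weyl group: the number of positive real affine roots
sent to negative ones. -/
noncomputable def affLength {V : Type*} [NormedAddCommGroup V] [InnerProductSpace ℝ V]
    (Φ : Set V) (Δ : Finset V) (w : Module.End ℝ (V × ℝ)) : ℕ :=
  {p | p ∈ PosAffRoots Φ Δ ∧ -(w p) ∈ PosAffRoots Φ Δ}.ncard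

/-- Bruhat order on the affine Weyl group: `u ≤ w` iff `w` is obtained from `u` by a chain of
right multiplications by reflections, each increasing the length. -/
def bruhatLE {V : Type*} [NormedAddCommGroup V] [InnerProductSpace ℝ V]
    (Φ : Set V) (Δ : Finset V) (u w : Module.End ℝ (V × ℝ)) : Prop :=
  Relation.ReflTransGen
    (fun a b => (∃ t ∈ AffRefls Φ, b = a * t) ∧ affLength Φ Δ a < affLength Φ Δ b) u w

/-- Strict Bruhat order. -/
def bruhatLT {V : Type*} [NormedAddCommGroup V] [InnerProductSpace ℝ V]
    (Φ : Set V) (Δ : Finset V) (u w : Module.End ℝ (V × ℝ)) : Prop :=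
  bruhatLE Φ Δ u w ∧ u ≠ w

/-- The simple affine roots `Δ ∪ {δ - θ}`, as elements of `V × ℝδ`. -/
def SimpleAffRoots {V : Type*} [NormedAddCommGroup V] [InnerProductSpace ℝ V]
    (Δ : Finset V) (θ : V) : Set (V × ℝ) :=
  (fun b => ((b, (0 : ℝ)) : V × ℝ)) '' ↑Δ ∪ {((-θ, (1 : ℝ)) : V × ℝ)}

/-- The Richardson–Springer monoid operation `s ∘ σ` on involutions. -/
noncomputable def rsCirc {V : Type*} [NormedAddCommGroup V] [InnerProductSpace ℝ V]
    (s σ : Module.End ℝ (V × ℝ)) : Module.End ℝ (V × ℝ) :=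
  if s * σ = σ * s then s * σ else s * σ * s

section helpers
variable {V : Type*} [NormedAddCommGroup V] [InnerProductSpace ℝ V]

lemma sAff_apply' (β : V) (n : ℝ) (x : V) (t : ℝ) :
    sAff β n (x, t) = (x, t) - ((2 / ⟪β, β⟫) * ⟪β, x⟫) • ((β, n) : V × ℝ) := by
  simp [sAff, acoroot, LinearMap.sub_apply, LinearMap.smulRight_apply, smul_smul]

lemma sAff_fix {γ : V} {x : V} (h : ⟪γ, x⟫ = 0) (n : ℝ) (t : ℝ) :
    sAff γ n (x, t) = (x, t) := by
  rw [sAff_apply', h]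
  simp

lemma sAff_smul {β : V} (hβ : ⟪β, β⟫ ≠ 0) (c : ℝ) (t : ℝ) :
    sAff β (-1) (c • β, t) = (-(c • β), t + 2 * c) := by
  rw [sAff_apply']
  have h1 : ⟪β, c • β⟫ = c * ⟪β, β⟫ := real_inner_smul_right β β c
  have h2 : (2 / ⟪β, β⟫) * ⟪β, c • β⟫ = 2 * c := by
    rw [h1]; field_simp
  rw [h2, Prod.smul_mk, Prod.mk_sub_mk, Prod.mk.injEq]
  refine ⟨by module, by simp [smul_eq_mul]⟩

lemma sAff_self {β : V} (hβ : ⟪β, β⟫ ≠ 0) (t : ℝ) :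
    sAff β (-1) (β, t) = (-β, t + 2) := by
  have := sAff_smul hβ 1 t
  simpa using this

lemma sAff_neg_self {β : V} (hβ : ⟪β, β⟫ ≠ 0) (t : ℝ) :
    sAff β (-1) (-β, t) = (β, t - 2) := by
  have := sAff_smul hβ (-1) t
  simp only [neg_smul, one_smul, neg_neg, mul_neg, mul_one] at this
  rw [this]
  norm_num
  ring

lemma noncommProd_fix (T : Finset V) (f : V → Module.End ℝ (V × ℝ)) (h) (v : V × ℝ)
    (hf : ∀ γ ∈ T, f γ v = v) : T.noncommProd f h v = v := by
  induction T using Finset.cons_induction with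
  | empty => simp
  | cons a s ha ih =>
    rw [Finset.noncommProd_cons]
    rw [Module.End.mul_apply, ih _ (fun γ hγ => hf γ (Finset.mem_cons_of_mem hγ)),
      hf a (Finset.mem_cons_self a s)]

lemma noncommProd_extract (T : Finset V) (f : V → Module.End ℝ (V × ℝ)) (h) {a : V}
    (ha : a ∈ T) :
    T.noncommProd f h = f a * (T.erase a).noncommProd f
      (h.mono (by simp [Finset.coe_subset, Finset.erase_subset])) := by
  have h1 : T.noncommProd f h = (insert a (T.erase a)).noncommProd f
      (by rw [Finset.insert_erase ha]; exact h) :=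
    Finset.noncommProd_congr (Finset.insert_erase ha).symm (fun _ _ => rfl) h
  rw [h1, Finset.noncommProd_insert_of_notMem _ _ _ _ (Finset.notMem_erase a T)]

end helpers

/-- if `S` is an orthogonal set of positive roots and `S₀ ⊆ S ∪ (-S)` satisfies
`∏_{β ∈ S₀} s_{δ-β} = ∏_{β ∈ S} s_{δ-β}` in the affine Weyl group, then `S₀ = S`. -/
theorem stmt4 {V : Type*} [NormedAddCommGroup V] [InnerProductSpace ℝ V]
    (Φ : Set V) (hΦ : IsRootSystem Φ)
    (Δ : Finset V) (hΔ : IsBase Φ Δ)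
    (S S₀ : Finset V)
    (hSpos : ↑S ⊆ PosRoots Φ Δ)
    (horth : OrthogonalSet (↑S : Set V))
    (hS₀ : S₀ ⊆ S ∪ S.image (fun x => -x))
    (hc : (↑S : Set V).Pairwise fun a b => Commute (sAff a (-1)) (sAff b (-1)))
    (hc₀ : (↑S₀ : Set V).Pairwise fun a b => Commute (sAff a (-1)) (sAff b (-1)))
    (heq : S₀.noncommProd (fun β => sAff β (-1)) hc₀ = S.noncommProd (fun β => sAff β (-1)) hc) :
    S₀ = S := by
  -- key claim: for each β ∈ S, β ∈ S₀ and -β ∉ S₀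
  have key : ∀ β ∈ S, β ∈ S₀ ∧ -β ∉ S₀ := by
    intro β hβS
    have hβΦ : β ∈ Φ := (hSpos hβS).1
    have hβ0 : β ≠ 0 := hΦ.ne_zero β hβΦ
    have hββ : ⟪β, β⟫ ≠ 0 := fun h => hβ0 (inner_self_eq_zero.mp h)
    have hβnβ : β ≠ -β := by
      intro h
      apply hβ0
      have : β + β = 0 := by nth_rewrite 2 [h]; simp
      have h2 : (2 : ℝ) • β = 0 := by rw [two_smul]; exact this
      simpa using (smul_eq_zero.mp h2).resolve_left (by norm_num)
    have hnββ : ⟪-β, -β⟫ ≠ 0 := by rwa [inner_neg_neg]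
    -- evaluation of both sides of heq at (β, 0)
    have heval := DFunLike.congr_fun heq ((β, (0 : ℝ)) : V × ℝ)
    -- RHS value
    have hrhs : S.noncommProd (fun β => sAff β (-1)) hc (β, (0 : ℝ)) = (-β, 2) := by
      rw [noncommProd_extract S _ hc hβS, Module.End.mul_apply,
        noncommProd_fix _ _ _ _ (fun γ hγ => ?_), sAff_self hββ]
      · norm_num
      · have hγS : γ ∈ S := Finset.mem_of_mem_erase hγ
        have hγβ : γ ≠ β := Finset.ne_of_mem_erase hγ
        exact sAff_fix (horth γ hγS β hβS hγβ) _ _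
    rw [hrhs] at heval
    -- orthogonality of other elements of S₀ to β
    have horthS₀ : ∀ γ ∈ S₀, γ ≠ β → γ ≠ -β → ⟪γ, β⟫ = 0 := by
      intro γ hγ h1 h2
      rcases Finset.mem_union.1 (hS₀ hγ) with h | h
      · exact horth γ h β hβS h1
      · obtain ⟨γ', hγ', rfl⟩ := Finset.mem_image.1 h
        have hne : γ' ≠ β := fun e => h2 (by rw [e])
        rw [inner_neg_left, horth γ' hγ' β hβS hne, neg_zero]
    by_cases hb : β ∈ S₀
    · by_cases hnb : -β ∈ S₀
      · -- both β and -β in S₀: contradicts commutativity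
        exfalso
        have hcomm := hc₀ (Finset.mem_coe.2 hb) (Finset.mem_coe.2 hnb) hβnβ
        have h1 := DFunLike.congr_fun hcomm.eq ((β, (0 : ℝ)) : V × ℝ)
        simp only [Module.End.mul_apply] at h1
        have e1 : sAff (-β) (-1) ((β, (0:ℝ)) : V × ℝ) = (-β, -2) := by
          have := sAff_neg_self hnββ (0 : ℝ)
          simp only [neg_neg] at this
          rw [this]; norm_num
        have e2 : sAff β (-1) ((-β, (-2:ℝ)) : V × ℝ) = (β, -4) := by
          rw [sAff_neg_self hββ]; norm_num
        have e3 : sAff β (-1) ((β, (0:ℝ)) : V × ℝ) = (-β, 2) := by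
          rw [sAff_self hββ]; norm_num
        have e4 : sAff (-β) (-1) ((-β, (2:ℝ)) : V × ℝ) = (β, 4) := by
          have := sAff_self hnββ (2 : ℝ)
          simp only [neg_neg] at this
          rw [this]; norm_num
        rw [e1, e2, e3, e4] at h1
        have := (Prod.mk.injEq _ _ _ _).mp h1
        linarith [this.2]
      · exact ⟨hb, hnb⟩
    · exfalso
      by_cases hnb : -β ∈ S₀
      · -- only -β in S₀
        have hlhs : S₀.noncommProd (fun β => sAff β (-1)) hc₀ (β, (0 : ℝ)) = (-β, -2) := by
          rw [noncommProd_extract S₀ _ hc₀ hnb, Module.End.mul_apply,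
            noncommProd_fix _ _ _ _ (fun γ hγ => ?_)]
          · have := sAff_neg_self hnββ (0 : ℝ)
            simp only [neg_neg] at this
            rw [this]; norm_num
          · have hγS : γ ∈ S₀ := Finset.mem_of_mem_erase hγ
            have hγ2 : γ ≠ -β := Finset.ne_of_mem_erase hγ
            have hγ1 : γ ≠ β := fun e => hb (e ▸ hγS)
            exact sAff_fix (horthS₀ γ hγS hγ1 hγ2) _ _
        rw [hlhs] at heval
        have := (Prod.mk.injEq _ _ _ _).mp heval
        linarith [this.2]
      · -- neither
        have hlhs : S₀.noncommProd (fun β => sAff β (-1)) hc₀ (β, (0 : ℝ)) = (β, 0) := by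
          refine noncommProd_fix _ _ _ _ (fun γ hγ => ?_)
          have hγ1 : γ ≠ β := fun e => hb (e ▸ hγ)
          have hγ2 : γ ≠ -β := fun e => hnb (e ▸ hγ)
          exact sAff_fix (horthS₀ γ hγ hγ1 hγ2) _ _
        rw [hlhs] at heval
        have := (Prod.mk.injEq _ _ _ _).mp heval
        linarith [this.2]
  apply Finset.Subset.antisymm
  · intro γ hγ
    rcases Finset.mem_union.1 (hS₀ hγ) with h | h
    · exact h
    · obtain ⟨γ', hγ', rfl⟩ := Finset.mem_image.1 h
      exact absurd hγ (key γ' hγ').2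
  · intro β hβ
    exact (key β hβ).1
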